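/- arXiv:2305.08085 — 2 statements merged into one kernel-verified Lean document; each statement's English description precedes it below -/
import Mathlib

section
/- With monatomic ideal-gas state equations e = ρc²(G − 1/γ), p = ρc²/γ where γ = mc²/(k_B T), and triple-tensor coefficients a = ρc²(1/4 + G/γ), b = ρc²G/γ, the compatibility condition a = (1/4){ −b + (e + p − T p_T)·(b_ρ/p_ρ) + T·b_T } holds identically, where subscripts denote partial derivatives with respect to ρ and T. -/
/-- With the monatomic ideal-gas state equations
`e = ρc²(G − 1/γ)`, `p = ρc²/γ` (with `γ = mc²/(k_B T)`) and triple-tensor coefficients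
`a = ρc²(1/4 + G/γ)`, `b = ρc²G/γ`, the compatibility condition
`a = (1/4){ -b + (e + p - T p_T)(b_ρ/p_ρ) + T b_T }` holds identically. -/
theorem monatomic_compatibility
    (c m kB : ℝ) (hc : 0 < c) (hm : 0 < m) (hkB : 0 < kB)
    (G : ℝ → ℝ)
    (hG : ∀ x : ℝ, 0 < x → HasDerivAt G (-1 - 5 * G x / x + (G x) ^ 2) x)
    (γ : ℝ → ℝ) (hγ : ∀ T : ℝ, γ T = m * c ^ 2 / (kB * T))
    (e p a b : ℝ → ℝ → ℝ)
    (he : ∀ ρ T : ℝ, e ρ T = ρ * c ^ 2 * (G (γ T) - 1 / γ T))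
    (hp : ∀ ρ T : ℝ, p ρ T = ρ * c ^ 2 / γ T)
    (ha : ∀ ρ T : ℝ, a ρ T = ρ * c ^ 2 * (1 / 4 + G (γ T) / γ T))
    (hb : ∀ ρ T : ℝ, b ρ T = ρ * c ^ 2 * G (γ T) / γ T)
    (ρ T : ℝ) (hρ : 0 < ρ) (hT : 0 < T) :
    a ρ T = (1 / 4) * (-(b ρ T)
      + (e ρ T + p ρ T - T * deriv (fun T' => p ρ T') T)
        * (deriv (fun ρ' => b ρ' T) ρ / deriv (fun ρ' => p ρ' T) ρ)
      + T * deriv (fun T' => b ρ T') T) := by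
  set x : ℝ := m * c ^ 2 / (kB * T) with hxdef
  have hx : 0 < x := by positivity
  have hxne : x ≠ 0 := hx.ne'
  have hTne : T ≠ 0 := hT.ne'
  have hcne : c ≠ 0 := hc.ne'
  have hmne : m ≠ 0 := hm.ne'
  have hkne : kB ≠ 0 := hkB.ne'
  have hγT : γ T = x := by rw [hγ]
  -- derivative of p in ρ
  have hpρ : deriv (fun ρ' => p ρ' T) ρ = c ^ 2 / x := by
    have : (fun ρ' => p ρ' T) = fun ρ' => ρ' * (c ^ 2 / x) := by
      funext ρ'; rw [hp, hγT]; ring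
    rw [this]
    simpa using ((hasDerivAt_id ρ).mul_const (c ^ 2 / x)).deriv
  -- derivative of b in ρ
  have hbρ : deriv (fun ρ' => b ρ' T) ρ = c ^ 2 * G x / x := by
    have : (fun ρ' => b ρ' T) = fun ρ' => ρ' * (c ^ 2 * G x / x) := by
      funext ρ'; rw [hb, hγT]; ring
    rw [this]
    simpa using ((hasDerivAt_id ρ).mul_const (c ^ 2 * G x / x)).deriv
  -- derivative of p in T
  have hpT : deriv (fun T' => p ρ T') T = ρ * kB / m := by
    have : (fun T' => p ρ T') = fun T' => T' * (ρ * kB / m) := by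
      funext T'
      rw [hp, hγ]
      by_cases h : T' = 0
      · simp [h]
      · field_simp
    rw [this]
    simpa using ((hasDerivAt_id T).mul_const (ρ * kB / m)).deriv
  -- inner function T' ↦ γ T'
  have hinner : HasDerivAt (fun T' => m * c ^ 2 / (kB * T'))
      (m * c ^ 2 / kB * -(T ^ 2)⁻¹) T := by
    have : (fun T' : ℝ => m * c ^ 2 / (kB * T')) = fun T' => m * c ^ 2 / kB * T'⁻¹ := by
      funext T'; rw [← div_div, div_eq_mul_inv]
    rw [this]
    exact (hasDerivAt_inv hTne).const_mul (m * c ^ 2 / kB)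
  have hcomp : HasDerivAt (fun T' => G (m * c ^ 2 / (kB * T')))
      ((-1 - 5 * G x / x + (G x) ^ 2) * (m * c ^ 2 / kB * -(T ^ 2)⁻¹)) T :=
    (hG x hx).comp T hinner
  -- derivative of b in T
  have hbT : deriv (fun T' => b ρ T') T
      = ρ * kB / m * (G x + T * ((-1 - 5 * G x / x + (G x) ^ 2)
          * (m * c ^ 2 / kB * -(T ^ 2)⁻¹))) := by
    have heq : (fun T' => b ρ T')
        = fun T' => ρ * kB / m * (T' * G (m * c ^ 2 / (kB * T'))) := by
      funext T'
      rw [hb, hγ]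
      by_cases h : T' = 0
      · simp [h]
      · field_simp
    rw [heq]
    have hmul : HasDerivAt (fun T' => T' * G (m * c ^ 2 / (kB * T')))
        (1 * G (m * c ^ 2 / (kB * T)) + T * ((-1 - 5 * G x / x + (G x) ^ 2)
          * (m * c ^ 2 / kB * -(T ^ 2)⁻¹))) T := (hasDerivAt_id T).mul hcomp
    have := (hmul.const_mul (ρ * kB / m)).deriv
    rw [this, ← hxdef, one_mul]
  rw [ha, hb, he, hp, hγT, hpρ, hbρ, hpT, hbT]
  have hxT : x * (kB * T) = m * c ^ 2 := by
    rw [hxdef]; field_simp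
  field_simp
  nlinarith [hxT, sq_nonneg (G x), sq_nonneg T, mul_pos hx hT]
end

section
/- For the relativistic polyatomic coefficients a = (1/4)c²ρ(1/γ² + ω/γ + ω² − ω′) and b = c²ρ(γω + 1)/γ² with e = ρc²ω, p = ρc²/γ and γ = mc²/(k_BT), the reduced compatibility condition a = (1/4){ b(e/p − 1) + T b_T } holds identically. -/
/-- For the relativistic polyatomic coefficients
`a = (1/4)c²ρ(1/γ² + ω/γ + ω² − ω′)` and `b = c²ρ(γω + 1)/γ²`, with `e = ρc²ω`,
`p = ρc²/γ`, `γ = mc²/(k_BT)`, the reduced compatibility condition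
`a = (1/4){ b(e/p − 1) + T b_T }` holds identically. -/
theorem polyatomic_ACPR_compatibility
    (m c kB : ℝ) (hm : 0 < m) (hc : 0 < c) (hkB : 0 < kB)
    (ω ω' : ℝ → ℝ) (hω : ∀ x : ℝ, HasDerivAt ω (ω' x) x)
    (γ : ℝ → ℝ) (hγ : ∀ T : ℝ, γ T = m * c ^ 2 / (kB * T))
    (e p a b : ℝ → ℝ → ℝ)
    (he : ∀ ρ T : ℝ, e ρ T = ρ * c ^ 2 * ω (γ T))
    (hp : ∀ ρ T : ℝ, p ρ T = ρ * c ^ 2 / γ T)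
    (ha : ∀ ρ T : ℝ, a ρ T = (1 / 4) * c ^ 2 * ρ *
      (1 / (γ T) ^ 2 + ω (γ T) / γ T + (ω (γ T)) ^ 2 - ω' (γ T)))
    (hb : ∀ ρ T : ℝ, b ρ T = c ^ 2 * ρ * (γ T * ω (γ T) + 1) / (γ T) ^ 2)
    (ρ T : ℝ) (hρ : 0 < ρ) (hT : 0 < T) :
    a ρ T = (1 / 4) * (b ρ T * (e ρ T / p ρ T - 1)
      + T * deriv (fun t => b ρ t) T) := by
  have hkT : kB * T ≠ 0 := (mul_pos hkB hT).ne'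
  have hK : (0:ℝ) < m * c ^ 2 := mul_pos hm (pow_pos hc 2)
  have hGpos : 0 < γ T := by rw [hγ]; positivity
  have hG : γ T ≠ 0 := hGpos.ne'
  -- derivative of γ
  have hd1 : HasDerivAt (fun t : ℝ => kB * t) kB T := by
    simpa using (hasDerivAt_id T).const_mul kB
  have hd2 : HasDerivAt (fun t : ℝ => (kB * t)⁻¹) (-kB / (kB * T) ^ 2) T :=
    hd1.inv hkT
  have hγfun : γ = fun t : ℝ => m * c ^ 2 * (kB * t)⁻¹ := by
    funext t; rw [hγ t, div_eq_mul_inv]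
  set γ' : ℝ := m * c ^ 2 * (-kB / (kB * T) ^ 2) with hγ'def
  have hdγ : HasDerivAt γ γ' T := by
    rw [hγfun]; exact hd2.const_mul _
  have hdω : HasDerivAt (fun t => ω (γ t)) (ω' (γ T) * γ') T :=
    (hω (γ T)).comp T hdγ
  -- derivative of b ρ
  have hnum : HasDerivAt (fun t => c ^ 2 * ρ * (γ t * ω (γ t) + 1))
      (c ^ 2 * ρ * (γ' * ω (γ T) + γ T * (ω' (γ T) * γ'))) T := by
    simpa using ((hdγ.mul hdω).add_const 1).const_mul (c ^ 2 * ρ)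
  have hden : HasDerivAt (fun t => (γ t) ^ 2) (2 * γ T ^ 1 * γ') T := by
    simpa using hdγ.fun_pow 2
  have hdb : HasDerivAt (fun t => c ^ 2 * ρ * (γ t * ω (γ t) + 1) / (γ t) ^ 2)
      ((c ^ 2 * ρ * (γ' * ω (γ T) + γ T * (ω' (γ T) * γ')) * (γ T) ^ 2
        - c ^ 2 * ρ * (γ T * ω (γ T) + 1) * (2 * γ T ^ 1 * γ'))
        / ((γ T) ^ 2) ^ 2) T :=
    hnum.div hden (pow_ne_zero 2 hG)
  have hbfun : (fun t => b ρ t)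
      = fun t => c ^ 2 * ρ * (γ t * ω (γ t) + 1) / (γ t) ^ 2 :=
    funext (hb ρ)
  have hderiv : deriv (fun t => b ρ t) T
      = (c ^ 2 * ρ * (γ' * ω (γ T) + γ T * (ω' (γ T) * γ')) * (γ T) ^ 2
        - c ^ 2 * ρ * (γ T * ω (γ T) + 1) * (2 * γ T ^ 1 * γ'))
        / ((γ T) ^ 2) ^ 2 := by
    rw [hbfun]; exact hdb.deriv
  have hTγ' : T * γ' = -(γ T) := by
    rw [hγ'def, hγ T]; field_simp
  have hγ'eq : γ' = -(γ T) / T := by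
    rw [eq_div_iff hT.ne']
    linear_combination hTγ'
  rw [hγ'eq] at hderiv
  rw [ha, hb, he, hp, hderiv]
  have hc2 : c ^ 2 ≠ 0 := (pow_pos hc 2).ne'
  have hρ0 : ρ ≠ 0 := hρ.ne'
  field_simp
  ring
end
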